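/- Let F : ℕ → A be finitely supported (F(k) = 0 for all but finitely many k), representing the element Σ_k F(k)·x^k of the skew polynomial ring A[x; σ̃, 0]. Then for every finitely supported G : ℕ → A and every m ∈ ℕ one has Σ_{k=0}^{m} F(k)·σ̃^k(G(m−k)) = Σ_{k=0}^{m} G(k)·σ̃^k(F(m−k)) (i.e. Σ_k F(k)·x^k lies in the center of A[x; σ̃, 0]) if and only if for every k ∈ ℕ, F(k) vanishes on Sep^k(X) and σ̃(F(k)) = F(k). -/

import Mathlib

theorem stmt7 (n : ℕ) (hn : 1 ≤ n) (σ : Equiv.Perm (Fin n))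
    (F : ℕ → Fin n → ℝ) (hF : (Function.support F).Finite) :
    (∀ G : ℕ → Fin n → ℝ, (Function.support G).Finite → ∀ m : ℕ,
        ∑ k ∈ Finset.range (m + 1), F k * (G (m - k) ∘ ⇑(σ ^ k).symm) =
          ∑ k ∈ Finset.range (m + 1), G k * (F (m - k) ∘ ⇑(σ ^ k).symm)) ↔
      (∀ k : ℕ, (∀ x : Fin n, (σ ^ k) x ≠ x → F k x = 0) ∧ F k ∘ ⇑σ.symm = F k) := by
  constructor
  · intro h k
    constructor
    · intro x hx
      set g : Fin n → ℝ := fun y => if y = (σ ^ k).symm x then 1 else 0 with hg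
      set G : ℕ → Fin n → ℝ := fun l => if l = 0 then g else 0 with hG
      have hGfin : (Function.support G).Finite := by
        apply Set.Finite.subset (Set.finite_singleton 0)
        intro l hl
        simp only [Set.mem_singleton_iff]
        by_contra hl0
        exact (Function.mem_support.mp hl) (by simp [hG, hl0])
      have hm := h G hGfin k
      have hL : ∑ j ∈ Finset.range (k + 1), F j * (G (k - j) ∘ ⇑(σ ^ j).symm)
          = F k * (g ∘ ⇑(σ ^ k).symm) := by
        rw [Finset.sum_eq_single k]
        · simp [hG]
        · intro j hj hjk
          have hj' : k - j ≠ 0 := by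
            have := Finset.mem_range.mp hj
            omega
          have : G (k - j) = 0 := by simp [hG, hj']
          rw [this]
          funext y; simp
        · intro hk; exact absurd (Finset.self_mem_range_succ k) hk
      have hR : ∑ j ∈ Finset.range (k + 1), G j * (F (k - j) ∘ ⇑(σ ^ j).symm)
          = g * F k := by
        rw [Finset.sum_eq_single 0]
        · simp [hG, Equiv.Perm.one_symm]
        · intro j hj hj0
          have : G j = 0 := by simp [hG, hj0]
          rw [this]; funext y; simp
        · intro hk; exact absurd (Finset.mem_range.mpr (Nat.succ_pos k)) hk
      rw [hL, hR] at hm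
      have := congrFun hm x
      simp only [Pi.mul_apply, Function.comp_apply] at this
      have h1 : g ((σ ^ k).symm x) = 1 := by simp [hg]
      have h2 : g x = 0 := by
        have : x ≠ (σ ^ k).symm x := by
          intro hxe
          apply hx
          rw [Equiv.eq_symm_apply] at hxe
          exact hxe
        simp [hg, this]
      rw [h1, h2] at this
      linarith [this]
    · -- F k ∘ σ.symm = F k
      set G : ℕ → Fin n → ℝ := fun l => if l = 1 then (1 : Fin n → ℝ) else 0 with hG
      have hGfin : (Function.support G).Finite := by
        apply Set.Finite.subset (Set.finite_singleton 1)
        intro l hl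
        simp only [Set.mem_singleton_iff]
        by_contra hl0
        exact (Function.mem_support.mp hl) (by simp [hG, hl0])
      have hm := h G hGfin (k + 1)
      have hL : ∑ j ∈ Finset.range (k + 2), F j * (G (k + 1 - j) ∘ ⇑(σ ^ j).symm)
          = F k := by
        rw [Finset.sum_eq_single k]
        · have : k + 1 - k = 1 := by omega
          rw [this]
          have : G 1 = 1 := by simp [hG]
          rw [this]
          funext y; simp
        · intro j hj hjk
          have hj' : k + 1 - j ≠ 1 := by
            have := Finset.mem_range.mp hj
            omega
          have : G (k + 1 - j) = 0 := by simp [hG, hj']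
          rw [this]; funext y; simp
        · intro hk; exact absurd (Finset.mem_range.mpr (by omega)) hk
      have hR : ∑ j ∈ Finset.range (k + 2), G j * (F (k + 1 - j) ∘ ⇑(σ ^ j).symm)
          = F k ∘ ⇑σ.symm := by
        rw [Finset.sum_eq_single 1]
        · have : G 1 = 1 := by simp [hG]
          rw [this]
          funext y; simp
        · intro j hj hj1
          have : G j = 0 := by simp [hG, hj1]
          rw [this]; funext y; simp
        · intro hk; exact absurd (Finset.mem_range.mpr (by omega)) hk
      rw [hL, hR] at hm
      exact hm.symm
  · intro h G hG m
    have hstab : ∀ j k y, F j ((σ ^ k).symm y) = F j y := by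
      intro j k
      induction k with
      | zero => intro y; simp [Equiv.Perm.one_symm]
      | succ k ih =>
        intro y
        have h1 : (σ ^ (k + 1)).symm y = σ.symm ((σ ^ k).symm y) := by
          rw [pow_succ]; rfl
        rw [h1]
        have h2 := congrFun (h j).2 ((σ ^ k).symm y)
        simp only [Function.comp_apply] at h2
        rw [h2, ih]
    funext x
    rw [Finset.sum_apply, Finset.sum_apply]
    calc ∑ k ∈ Finset.range (m + 1), (F k * (G (m - k) ∘ ⇑(σ ^ k).symm)) x
        = ∑ k ∈ Finset.range (m + 1), F k x * G (m - k) x := by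
          apply Finset.sum_congr rfl
          intro k _
          simp only [Pi.mul_apply, Function.comp_apply]
          by_cases hc : (σ ^ k) x = x
          · have : (σ ^ k).symm x = x := by rw [Equiv.symm_apply_eq]; exact hc.symm
            rw [this]
          · have := (h k).1 x hc
            rw [this]; ring
      _ = ∑ k ∈ Finset.range (m + 1), (G k * (F (m - k) ∘ ⇑(σ ^ k).symm)) x := by
          rw [← Finset.sum_range_reflect
            (fun k => (G k * (F (m - k) ∘ ⇑(σ ^ k).symm)) x) (m + 1)]
          apply Finset.sum_congr rfl
          intro k hk
          have hk' : k ≤ m := Nat.lt_succ_iff.mp (Finset.mem_range.mp hk)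
          simp only [Pi.mul_apply, Function.comp_apply]
          rw [hstab]
          have e1 : m + 1 - 1 - k = m - k := by omega
          rw [e1]
          have e2 : m - (m - k) = k := by omega
          rw [e2, mul_comm]
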